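/- For every n ≥ 4 there exists a graph G of order n with μ₁(G) + μ₁(Ḡ) > (4/3)·n − 2, where μ₁ denotes the largest adjacency eigenvalue. -/

import Mathlib

open Matrix SimpleGraph

/-- The eigenvalues of the adjacency matrix of `G`, in descending order:
`graphEig G i` is the `(i+1)`-th largest eigenvalue. -/
noncomputable def graphEig {n : ℕ} (G : SimpleGraph (Fin n)) (i : Fin n) : ℝ :=
  letI := Classical.decRel G.Adj
  letI hH : (G.adjMatrix ℝ).IsHermitian := by rw [Matrix.IsHermitian, conjTranspose_eq_transpose_of_trivial]; exact G.isSymm_adjMatrix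
  hH.eigenvalues (Tuple.sort hH.eigenvalues i.rev)

open Finset

lemma rayleigh_bound {n : ℕ} {A : Matrix (Fin n) (Fin n) ℝ} (hA : A.IsHermitian) {M : ℝ}
    (hM : ∀ i, hA.eigenvalues i ≤ M) (x : Fin n → ℝ) :
    x ⬝ᵥ (A *ᵥ x) ≤ M * (x ⬝ᵥ x) := by
  classical
  set U : Matrix (Fin n) (Fin n) ℝ := (hA.eigenvectorUnitary : Matrix (Fin n) (Fin n) ℝ) with hU
  set y : Fin n → ℝ := Uᵀ *ᵥ x with hy
  have hstar : star U = Uᵀ := by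
    rw [Matrix.star_eq_conjTranspose, conjTranspose_eq_transpose_of_trivial]
  have hD : (RCLike.ofReal ∘ hA.eigenvalues : Fin n → ℝ) = hA.eigenvalues := by
    funext i; simp
  have hspec : A = U * Matrix.diagonal hA.eigenvalues * Uᵀ := by
    have := hA.spectral_theorem
    rwa [Unitary.conjStarAlgAut_apply, hstar, hD] at this
  have hUU : U * Uᵀ = 1 := by
    have := (Matrix.mem_unitaryGroup_iff).mp hA.eigenvectorUnitary.2
    rwa [hstar] at this
  set D : Matrix (Fin n) (Fin n) ℝ := Matrix.diagonal hA.eigenvalues with hDdef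
  have h1 : x ⬝ᵥ (A *ᵥ x) = y ⬝ᵥ (D *ᵥ y) := by
    rw [hspec, ← Matrix.mulVec_mulVec, ← Matrix.mulVec_mulVec, Matrix.dotProduct_mulVec,
      ← Matrix.mulVec_transpose]
  have h2 : x ⬝ᵥ x = y ⬝ᵥ y := by
    rw [hy, Matrix.dotProduct_mulVec, Matrix.vecMul_transpose, Matrix.mulVec_mulVec, hUU,
      Matrix.one_mulVec, dotProduct_comm]
  rw [h1, h2]
  simp only [hDdef, dotProduct, Matrix.mulVec_diagonal, Finset.mul_sum]
  apply Finset.sum_le_sum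
  intro i _
  have : y i * (hA.eigenvalues i * y i) = hA.eigenvalues i * (y i * y i) := by ring
  rw [this]
  exact mul_le_mul_of_nonneg_right (hM i) (mul_self_nonneg _)

lemma graphEig_zero_rayleigh {n : ℕ} (hn : 0 < n) (G : SimpleGraph (Fin n)) (x : Fin n → ℝ) :
    x ⬝ᵥ ((@SimpleGraph.adjMatrix ℝ (Fin n) G (Classical.decRel G.Adj) _ _) *ᵥ x)
      ≤ graphEig G ⟨0, hn⟩ * (x ⬝ᵥ x) := by
  letI := Classical.decRel G.Adj
  have hH : (G.adjMatrix ℝ).IsHermitian := by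
    rw [Matrix.IsHermitian, conjTranspose_eq_transpose_of_trivial]
    exact G.isSymm_adjMatrix
  have hg : graphEig G ⟨0, hn⟩ = hH.eigenvalues (Tuple.sort hH.eigenvalues (Fin.rev ⟨0, hn⟩)) :=
    rfl
  apply rayleigh_bound hH
  intro i
  rw [hg]
  set f := hH.eigenvalues with hf
  set σ := Tuple.sort f with hσ
  have hmono : Monotone (f ∘ σ) := Tuple.monotone_sort f
  have h1 : f i = (f ∘ σ) (σ.symm i) := by simp
  rw [h1]
  exact hmono (by rw [Fin.le_def]; have := (σ.symm i).isLt; simp [Fin.rev]; omega)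


lemma innerG_lt (n r a : ℕ) (ha : a < r) (hrn : r ≤ n) :
    ∑ b ∈ range n, ((if a ≠ b ∧ (a < r ∨ b < r) then (1:ℝ) else 0) * (if b < r then (2:ℝ) else 1))
      = 2*r - 2 + ((n:ℝ) - r) := by
  rw [range_eq_Ico, ← Finset.sum_Ico_consecutive _ (Nat.zero_le r) hrn]
  have h1 : ∑ b ∈ Ico 0 r, ((if a ≠ b ∧ (a < r ∨ b < r) then (1:ℝ) else 0) * (if b < r then (2:ℝ) else 1))
      = ∑ b ∈ Ico 0 r, ((2:ℝ) - (if a = b then 2 else 0)) := by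
    apply Finset.sum_congr rfl
    intro b hb
    rw [Finset.mem_Ico] at hb
    by_cases hab : a = b
    · simp [hab, hb.2]
    · simp [hab, ha, hb.2]
  have h2 : ∑ b ∈ Ico r n, ((if a ≠ b ∧ (a < r ∨ b < r) then (1:ℝ) else 0) * (if b < r then (2:ℝ) else 1))
      = ∑ b ∈ Ico r n, (1:ℝ) := by
    apply Finset.sum_congr rfl
    intro b hb
    rw [Finset.mem_Ico] at hb
    have hab : a ≠ b := by omega
    have hbr : ¬ b < r := by omega
    simp [hab, ha, hbr]
  rw [h1, h2, Finset.sum_sub_distrib, Finset.sum_ite_eq, Finset.sum_const, Finset.sum_const]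
  have : a ∈ Ico 0 r := by simp; omega
  rw [if_pos this]
  simp [Nat.card_Ico]
  rw [Nat.cast_sub hrn]
  ring

lemma innerG_ge (n r a : ℕ) (ha : r ≤ a) (hrn : r ≤ n) :
    ∑ b ∈ range n, ((if a ≠ b ∧ (a < r ∨ b < r) then (1:ℝ) else 0) * (if b < r then (2:ℝ) else 1))
      = 2*r := by
  rw [range_eq_Ico, ← Finset.sum_Ico_consecutive _ (Nat.zero_le r) hrn]
  have h1 : ∑ b ∈ Ico 0 r, ((if a ≠ b ∧ (a < r ∨ b < r) then (1:ℝ) else 0) * (if b < r then (2:ℝ) else 1))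
      = ∑ b ∈ Ico 0 r, (2:ℝ) := by
    apply Finset.sum_congr rfl
    intro b hb
    rw [Finset.mem_Ico] at hb
    have hab : a ≠ b := by omega
    simp [hab, hb.2]
  have h2 : ∑ b ∈ Ico r n, ((if a ≠ b ∧ (a < r ∨ b < r) then (1:ℝ) else 0) * (if b < r then (2:ℝ) else 1))
      = ∑ b ∈ Ico r n, (0:ℝ) := by
    apply Finset.sum_congr rfl
    intro b hb
    rw [Finset.mem_Ico] at hb
    have h3 : ¬ a < r := by omega
    have h4 : ¬ b < r := by omega
    simp [h3, h4]
  rw [h1, h2]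
  simp [Nat.card_Ico]
  ring

lemma sumG (n r : ℕ) (hrn : r ≤ n) :
    ∑ a ∈ range n, ((if a < r then (2:ℝ) else 1) *
      ∑ b ∈ range n, ((if a ≠ b ∧ (a < r ∨ b < r) then (1:ℝ) else 0) * (if b < r then (2:ℝ) else 1)))
      = 4*r*n - 4*r := by
  rw [← Finset.sum_range_add_sum_Ico _ hrn]
  have h1 : ∑ a ∈ range r, ((if a < r then (2:ℝ) else 1) *
      ∑ b ∈ range n, ((if a ≠ b ∧ (a < r ∨ b < r) then (1:ℝ) else 0) * (if b < r then (2:ℝ) else 1)))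
      = ∑ a ∈ range r, (2 * (2*r - 2 + ((n:ℝ) - r))) := by
    apply Finset.sum_congr rfl
    intro a haa
    rw [Finset.mem_range] at haa
    rw [innerG_lt n r a haa hrn, if_pos haa]
  have h2 : ∑ a ∈ Ico r n, ((if a < r then (2:ℝ) else 1) *
      ∑ b ∈ range n, ((if a ≠ b ∧ (a < r ∨ b < r) then (1:ℝ) else 0) * (if b < r then (2:ℝ) else 1)))
      = ∑ a ∈ Ico r n, ((2:ℝ)*r) := by
    apply Finset.sum_congr rfl
    intro a haa
    rw [Finset.mem_Ico] at haa
    have h3 : ¬ a < r := by omega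
    rw [innerG_ge n r a haa.1 hrn, if_neg h3, one_mul]
  rw [h1, h2]
  simp [Nat.card_Ico]
  rw [Nat.cast_sub hrn]
  ring

lemma sumGdenom (n r : ℕ) (hrn : r ≤ n) :
    ∑ a ∈ range n, ((if a < r then (2:ℝ) else 1) * (if a < r then (2:ℝ) else 1))
      = 3*r + n := by
  rw [range_eq_Ico, ← Finset.sum_Ico_consecutive _ (Nat.zero_le r) hrn]
  have h1 : ∑ a ∈ Ico 0 r, ((if a < r then (2:ℝ) else 1) * (if a < r then (2:ℝ) else 1))
      = ∑ a ∈ Ico 0 r, (4:ℝ) := by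
    apply Finset.sum_congr rfl
    intro a haa
    rw [Finset.mem_Ico] at haa
    rw [if_pos haa.2]; norm_num
  have h2 : ∑ a ∈ Ico r n, ((if a < r then (2:ℝ) else 1) * (if a < r then (2:ℝ) else 1))
      = ∑ a ∈ Ico r n, (1:ℝ) := by
    apply Finset.sum_congr rfl
    intro a haa
    rw [Finset.mem_Ico] at haa
    have h3 : ¬ a < r := by omega
    rw [if_neg h3]; norm_num
  rw [h1, h2]
  simp [Nat.card_Ico]
  rw [Nat.cast_sub hrn]
  ring

lemma innerC_ge (n r a : ℕ) (ha : r ≤ a) (han : a < n) (hrn : r ≤ n) :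
    ∑ b ∈ range n, ((if a ≠ b ∧ r ≤ a ∧ r ≤ b then (1:ℝ) else 0) * (if r ≤ b then (1:ℝ) else 0))
      = ((n:ℝ) - r) - 1 := by
  rw [range_eq_Ico, ← Finset.sum_Ico_consecutive _ (Nat.zero_le r) hrn]
  have h1 : ∑ b ∈ Ico 0 r, ((if a ≠ b ∧ r ≤ a ∧ r ≤ b then (1:ℝ) else 0) * (if r ≤ b then (1:ℝ) else 0))
      = ∑ b ∈ Ico 0 r, (0:ℝ) := by
    apply Finset.sum_congr rfl
    intro b hb
    rw [Finset.mem_Ico] at hb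
    have h3 : ¬ r ≤ b := by omega
    simp [h3]
  have h2 : ∑ b ∈ Ico r n, ((if a ≠ b ∧ r ≤ a ∧ r ≤ b then (1:ℝ) else 0) * (if r ≤ b then (1:ℝ) else 0))
      = ∑ b ∈ Ico r n, ((1:ℝ) - (if a = b then 1 else 0)) := by
    apply Finset.sum_congr rfl
    intro b hb
    rw [Finset.mem_Ico] at hb
    by_cases hab : a = b
    · simp [hab, ha, hb.1]
    · simp [hab, ha, hb.1]
  rw [h1, h2, Finset.sum_sub_distrib, Finset.sum_ite_eq, Finset.sum_const, Finset.sum_const]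
  have : a ∈ Ico r n := by simp; omega
  rw [if_pos this]
  simp [Nat.card_Ico]
  rw [Nat.cast_sub hrn]

lemma sumC (n r : ℕ) (hrn : r ≤ n) :
    ∑ a ∈ range n, ((if r ≤ a then (1:ℝ) else 0) *
      ∑ b ∈ range n, ((if a ≠ b ∧ r ≤ a ∧ r ≤ b then (1:ℝ) else 0) * (if r ≤ b then (1:ℝ) else 0)))
      = ((n:ℝ) - r) * (((n:ℝ) - r) - 1) := by
  rw [← Finset.sum_range_add_sum_Ico _ hrn]
  have h1 : ∑ a ∈ range r, ((if r ≤ a then (1:ℝ) else 0) *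
      ∑ b ∈ range n, ((if a ≠ b ∧ r ≤ a ∧ r ≤ b then (1:ℝ) else 0) * (if r ≤ b then (1:ℝ) else 0)))
      = ∑ a ∈ range r, (0:ℝ) := by
    apply Finset.sum_congr rfl
    intro a haa
    rw [Finset.mem_range] at haa
    have h3 : ¬ r ≤ a := by omega
    rw [if_neg h3, zero_mul]
  have h2 : ∑ a ∈ Ico r n, ((if r ≤ a then (1:ℝ) else 0) *
      ∑ b ∈ range n, ((if a ≠ b ∧ r ≤ a ∧ r ≤ b then (1:ℝ) else 0) * (if r ≤ b then (1:ℝ) else 0)))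
      = ∑ a ∈ Ico r n, (((n:ℝ) - r) - 1) := by
    apply Finset.sum_congr rfl
    intro a haa
    rw [Finset.mem_Ico] at haa
    rw [innerC_ge n r a haa.1 haa.2 hrn, if_pos haa.1, one_mul]
  rw [h1, h2, Finset.sum_const, Finset.sum_const, Nat.card_Ico, smul_zero, zero_add,
    nsmul_eq_mul, Nat.cast_sub hrn]

lemma sumCdenom (n r : ℕ) (hrn : r ≤ n) :
    ∑ a ∈ range n, ((if r ≤ a then (1:ℝ) else 0) * (if r ≤ a then (1:ℝ) else 0))
      = (n:ℝ) - r := by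
  rw [range_eq_Ico, ← Finset.sum_Ico_consecutive _ (Nat.zero_le r) hrn]
  have h1 : ∑ a ∈ Ico 0 r, ((if r ≤ a then (1:ℝ) else 0) * (if r ≤ a then (1:ℝ) else 0))
      = ∑ a ∈ Ico 0 r, (0:ℝ) := by
    apply Finset.sum_congr rfl
    intro a haa
    rw [Finset.mem_Ico] at haa
    have h3 : ¬ r ≤ a := by omega
    rw [if_neg h3, zero_mul]
  have h2 : ∑ a ∈ Ico r n, ((if r ≤ a then (1:ℝ) else 0) * (if r ≤ a then (1:ℝ) else 0))
      = ∑ a ∈ Ico r n, (1:ℝ) := by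
    apply Finset.sum_congr rfl
    intro a haa
    rw [Finset.mem_Ico] at haa
    rw [if_pos haa.1, one_mul]
  rw [h1, h2]
  simp [Nat.card_Ico]
  rw [Nat.cast_sub hrn]


/-- Complete split graph: clique on `{0,…,r-1}` joined to independent set. -/
def splitG (n r : ℕ) : SimpleGraph (Fin n) where
  Adj u v := (u : ℕ) ≠ v ∧ ((u : ℕ) < r ∨ (v : ℕ) < r)
  symm := by
    constructor
    intro u v h
    exact ⟨h.1.symm, h.2.symm⟩
  loopless := by
    constructor
    intro u h
    exact h.1 rfl

lemma splitG_adj (n r : ℕ) (u v : Fin n) :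
    (splitG n r).Adj u v ↔ ((u : ℕ) ≠ v ∧ ((u : ℕ) < r ∨ (v : ℕ) < r)) := Iff.rfl

lemma splitG_compl_adj (n r : ℕ) (u v : Fin n) :
    (splitG n r)ᶜ.Adj u v ↔ ((u : ℕ) ≠ v ∧ r ≤ (u : ℕ) ∧ r ≤ (v : ℕ)) := by
  rw [SimpleGraph.compl_adj, splitG_adj, ← Fin.val_ne_iff]
  omega

lemma dotG (n r : ℕ) :
    (fun u : Fin n => if (u:ℕ) < r then (2:ℝ) else 1) ⬝ᵥ
      ((@SimpleGraph.adjMatrix ℝ (Fin n) (splitG n r) (Classical.decRel _) _ _) *ᵥ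
       (fun u : Fin n => if (u:ℕ) < r then (2:ℝ) else 1))
    = ∑ a ∈ range n, ((if a < r then (2:ℝ) else 1) *
        ∑ b ∈ range n, ((if a ≠ b ∧ (a < r ∨ b < r) then (1:ℝ) else 0) *
          (if b < r then (2:ℝ) else 1))) := by
  letI := Classical.decRel (splitG n r).Adj
  have inner : ∀ u : Fin n,
      (∑ v : Fin n, (if (splitG n r).Adj u v then (1:ℝ) else 0) * (if (v:ℕ) < r then (2:ℝ) else 1))
        = ∑ b ∈ range n, ((if (u:ℕ) ≠ b ∧ ((u:ℕ) < r ∨ b < r) then (1:ℝ) else 0) *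
            (if b < r then (2:ℝ) else 1)) := by
    intro u
    rw [← Fin.sum_univ_eq_sum_range
      (fun b => (if (u:ℕ) ≠ b ∧ ((u:ℕ) < r ∨ b < r) then (1:ℝ) else 0) *
        (if b < r then (2:ℝ) else 1)) n]
    apply Finset.sum_congr rfl
    intro v _
    congr 1
    exact if_congr (splitG_adj n r u v) rfl rfl
  rw [← Fin.sum_univ_eq_sum_range
    (fun a => (if a < r then (2:ℝ) else 1) *
      ∑ b ∈ range n, ((if a ≠ b ∧ (a < r ∨ b < r) then (1:ℝ) else 0) *
        (if b < r then (2:ℝ) else 1))) n]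
  simp only [dotProduct, Matrix.mulVec, SimpleGraph.adjMatrix_apply]
  refine Finset.sum_congr rfl fun u _ => ?_
  beta_reduce
  rw [inner u]

lemma dotC (n r : ℕ) :
    (fun u : Fin n => if r ≤ (u:ℕ) then (1:ℝ) else 0) ⬝ᵥ
      ((@SimpleGraph.adjMatrix ℝ (Fin n) (splitG n r)ᶜ (Classical.decRel _) _ _) *ᵥ
       (fun u : Fin n => if r ≤ (u:ℕ) then (1:ℝ) else 0))
    = ∑ a ∈ range n, ((if r ≤ a then (1:ℝ) else 0) *
        ∑ b ∈ range n, ((if a ≠ b ∧ r ≤ a ∧ r ≤ b then (1:ℝ) else 0) *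
          (if r ≤ b then (1:ℝ) else 0))) := by
  letI := Classical.decRel (splitG n r)ᶜ.Adj
  have inner : ∀ u : Fin n,
      (∑ v : Fin n, (if (splitG n r)ᶜ.Adj u v then (1:ℝ) else 0) * (if r ≤ (v:ℕ) then (1:ℝ) else 0))
        = ∑ b ∈ range n, ((if (u:ℕ) ≠ b ∧ r ≤ (u:ℕ) ∧ r ≤ b then (1:ℝ) else 0) *
            (if r ≤ b then (1:ℝ) else 0)) := by
    intro u
    rw [← Fin.sum_univ_eq_sum_range
      (fun b => (if (u:ℕ) ≠ b ∧ r ≤ (u:ℕ) ∧ r ≤ b then (1:ℝ) else 0) *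
        (if r ≤ b then (1:ℝ) else 0)) n]
    apply Finset.sum_congr rfl
    intro v _
    congr 1
    exact if_congr (splitG_compl_adj n r u v) rfl rfl
  rw [← Fin.sum_univ_eq_sum_range
    (fun a => (if r ≤ a then (1:ℝ) else 0) *
      ∑ b ∈ range n, ((if a ≠ b ∧ r ≤ a ∧ r ≤ b then (1:ℝ) else 0) *
        (if r ≤ b then (1:ℝ) else 0))) n]
  simp only [dotProduct, Matrix.mulVec, SimpleGraph.adjMatrix_apply]
  refine Finset.sum_congr rfl fun u _ => ?_
  beta_reduce
  rw [inner u]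

lemma dotGdenom (n r : ℕ) :
    (fun u : Fin n => if (u:ℕ) < r then (2:ℝ) else 1) ⬝ᵥ
      (fun u : Fin n => if (u:ℕ) < r then (2:ℝ) else 1)
    = ∑ a ∈ range n, ((if a < r then (2:ℝ) else 1) * (if a < r then (2:ℝ) else 1)) := by
  rw [← Fin.sum_univ_eq_sum_range
    (fun a => (if a < r then (2:ℝ) else 1) * (if a < r then (2:ℝ) else 1)) n]
  rfl

lemma dotCdenom (n r : ℕ) :
    (fun u : Fin n => if r ≤ (u:ℕ) then (1:ℝ) else 0) ⬝ᵥ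
      (fun u : Fin n => if r ≤ (u:ℕ) then (1:ℝ) else 0)
    = ∑ a ∈ range n, ((if r ≤ a then (1:ℝ) else 0) * (if r ≤ a then (1:ℝ) else 0)) := by
  rw [← Fin.sum_univ_eq_sum_range
    (fun a => (if r ≤ a then (1:ℝ) else 0) * (if r ≤ a then (1:ℝ) else 0)) n]
  rfl

theorem stmt17 (n : ℕ) (hn : 4 ≤ n) :
    ∃ G : SimpleGraph (Fin n),
      4 / 3 * (n : ℝ) - 2 < graphEig G ⟨0, by omega⟩ + graphEig Gᶜ ⟨0, by omega⟩ := by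
  have hn0 : 0 < n := by omega
  set r := n / 3 with hrdef
  have hr1 : 1 ≤ r := by omega
  have hrn : r ≤ n := by omega
  have h3r : 3*r ≤ n := by omega
  have hlt : n < 3*r + 3 := by omega
  refine ⟨splitG n r, ?_⟩
  have hx := graphEig_zero_rayleigh hn0 (splitG n r)
    (fun u : Fin n => if (u:ℕ) < r then (2:ℝ) else 1)
  have hy := graphEig_zero_rayleigh hn0 (splitG n r)ᶜ
    (fun u : Fin n => if r ≤ (u:ℕ) then (1:ℝ) else 0)
  rw [dotG n r, sumG n r hrn, dotGdenom n r, sumGdenom n r hrn] at hx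
  rw [dotC n r, sumC n r hrn, dotCdenom n r, sumCdenom n r hrn] at hy
  show 4 / 3 * (n : ℝ) - 2 <
    graphEig (splitG n r) ⟨0, hn0⟩ + graphEig (splitG n r)ᶜ ⟨0, hn0⟩
  set M1 := graphEig (splitG n r) ⟨0, hn0⟩ with hM1def
  set M2 := graphEig (splitG n r)ᶜ ⟨0, hn0⟩ with hM2def
  have cR1 : (1:ℝ) ≤ (r:ℝ) := by exact_mod_cast hr1
  have c3r : 3*(r:ℝ) ≤ (n:ℝ) := by exact_mod_cast h3r
  have clt : (n:ℝ) < 3*(r:ℝ)+3 := by exact_mod_cast hlt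
  have h2 : (0:ℝ) < (n:ℝ) - (r:ℝ) := by linarith
  have h3 : (0:ℝ) < 3*(r:ℝ) + (n:ℝ) := by linarith
  have h1 : (0:ℝ) ≤ ((n:ℝ) - 3*(r:ℝ)) * (3*(r:ℝ) + 3 - (n:ℝ)) := by nlinarith
  have hM2 : (n:ℝ) - (r:ℝ) - 1 ≤ M2 := by nlinarith [hy, h2]
  have hM1 : ((n:ℝ) + 3*(r:ℝ) - 3)/3 < M1 := by nlinarith [hx, h1, h3]
  linarith
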